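/- Let β > 0 be real, and let d, i, j be integers with i > j > 0, d - 3i + j = 0, and β ≥ 0.6d. Then C(d,2j) · (2j)!/(j!·2^j) · C(d-2j, 3(i-j)) · (3(i-j))!/((i-j)!·6^(i-j)) · β^(i-d+1) < (d·β/e) · 0.9126^d. -/

import Mathlib

open Real Stirling

section Aux8

lemma N1 : (1:ℝ) ≤ 0.999406512 * 0.32829 * Real.exp 1.114474 := by
  have h := Real.sum_le_exp_of_nonneg (x := 1.114474) (by norm_num) 13
  rw [show (13:ℕ) = 12+1 from rfl] at h
  simp only [Finset.sum_range_succ, Finset.sum_range_zero, Nat.factorial] at h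
  norm_num at h
  nlinarith [h]

lemma N2 : (1:ℝ) ≤ 1.64170508913216 * 0.114473 * Real.exp 1.671711 := by
  have h := Real.sum_le_exp_of_nonneg (x := 1.671711) (by norm_num) 16
  rw [show (16:ℕ) = 15+1 from rfl] at h
  simp only [Finset.sum_range_succ, Finset.sum_range_zero, Nat.factorial] at h
  norm_num at h
  nlinarith [h]

-- tangent: (c*T)^m ≤ m^m * exp (c*T - m)
lemma tangent (c T : ℝ) (m : ℕ) (hc : 0 < c) (hT : 0 < T) (hm : 1 ≤ m) :
    (c*T)^m ≤ (m:ℝ)^m * Real.exp (c*T - m) := by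
  have hm0 : (0:ℝ) < m := by exact_mod_cast hm
  have hr : c*T/m ≤ Real.exp (c*T/m - 1) := by
    have := Real.add_one_le_exp (c*T/m - 1); linarith
  have h1 : (c*T)^m = (c*T/m)^m * (m:ℝ)^m := by
    rw [← mul_pow]; field_simp
  rw [h1]
  have h2 : (c*T/m)^m ≤ Real.exp (c*T/m - 1)^m :=
    pow_le_pow_left₀ (by positivity) hr m
  have h3 : Real.exp (c*T/m - 1)^m = Real.exp (c*T - m) := by
    rw [← Real.exp_nat_mul]
    congr 1
    field_simp
  nlinarith [pow_nonneg (le_of_lt hm0) m, h2, h3]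

lemma fact_upper2 (m : ℕ) (hm : 1 ≤ m) :
    (m.factorial : ℝ) * Real.exp 1 ^ m ≤ Real.exp 1 * Real.sqrt m * (m:ℝ)^m := by
  have hm0 : (0:ℝ) < m := by exact_mod_cast hm
  have hE : (0:ℝ) < Real.exp 1 := Real.exp_pos 1
  have h1 : stirlingSeq m ≤ Real.exp 1 / Real.sqrt 2 := by
    have := stirlingSeq'_antitone (Nat.zero_le (m-1))
    simpa [Function.comp, Nat.succ_eq_add_one, Nat.sub_add_cancel hm, stirlingSeq_one] using this
  have hden : (0:ℝ) < Real.sqrt (2*m) * ((m:ℝ)/Real.exp 1)^m := by positivity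
  have h2 : (m.factorial : ℝ) ≤ (Real.exp 1 / Real.sqrt 2) * (Real.sqrt (2*m) * ((m:ℝ)/Real.exp 1)^m) := by
    have := (div_le_iff₀ hden).mp (by simpa [stirlingSeq] using h1)
    linarith
  have h3 : (m.factorial : ℝ) * Real.exp 1 ^ m ≤
      (Real.exp 1 / Real.sqrt 2) * (Real.sqrt (2*m) * ((m:ℝ)/Real.exp 1)^m) * Real.exp 1 ^ m :=
    mul_le_mul_of_nonneg_right h2 (by positivity)
  refine h3.trans_eq ?_
  rw [Real.sqrt_mul (by norm_num : (0:ℝ) ≤ 2), div_pow]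
  have hs2 : Real.sqrt 2 ≠ 0 := by positivity
  field_simp
lemma fact_lower2 (m : ℕ) (hm : 1 ≤ m) :
    Real.sqrt π * (Real.sqrt 2 * Real.sqrt m) * (m:ℝ)^m ≤ (m.factorial : ℝ) * Real.exp 1 ^ m := by
  have hm0 : (0:ℝ) < m := by exact_mod_cast hm
  have hE : (0:ℝ) < Real.exp 1 := Real.exp_pos 1
  have h1 : Real.sqrt π ≤ stirlingSeq m := by
    have ht : Filter.Tendsto (stirlingSeq ∘ Nat.succ) Filter.atTop (nhds (Real.sqrt π)) :=
      tendsto_stirlingSeq_sqrt_pi.comp (Filter.tendsto_add_atTop_nat 1)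
    have := stirlingSeq'_antitone.le_of_tendsto ht (m-1)
    simpa [Function.comp, Nat.succ_eq_add_one, Nat.sub_add_cancel hm] using this
  have hden : (0:ℝ) < Real.sqrt (2*m) * ((m:ℝ)/Real.exp 1)^m := by positivity
  have h2 : Real.sqrt π * (Real.sqrt (2*m) * ((m:ℝ)/Real.exp 1)^m) ≤ (m.factorial : ℝ) := by
    have := (le_div_iff₀ hden).mp (by simpa [stirlingSeq] using h1)
    linarith
  have h3 : Real.sqrt π * (Real.sqrt (2*m) * ((m:ℝ)/Real.exp 1)^m) * Real.exp 1 ^ m ≤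
      (m.factorial : ℝ) * Real.exp 1 ^ m := mul_le_mul_of_nonneg_right h2 (by positivity)
  refine le_trans (le_of_eq ?_) h3
  rw [Real.sqrt_mul (by norm_num : (0:ℝ) ≤ 2), div_pow]
  field_simp
lemma TT (j k : ℕ) (hj : 1 ≤ j) (hk : 1 ≤ k) :
    (2*(j:ℝ)+3*(k:ℝ))^(j+k) ≤
      0.999406512^j * 1.64170508913216^k * Real.exp 1^(j+2*k) * (j:ℝ)^j * (k:ℝ)^k := by
  set J := (j:ℝ) with hJ
  set K := (k:ℝ) with hK
  have hJ1 : (1:ℝ) ≤ J := by rw [hJ]; exact_mod_cast hj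
  have hK1 : (1:ℝ) ≤ K := by rw [hK]; exact_mod_cast hk
  set D : ℝ := 2*J+3*K with hD
  have hD0 : 0 < D := by nlinarith
  have h1 : (0.32829*D)^j ≤ J^j * Real.exp (0.32829*D - j) := tangent _ _ _ (by norm_num) hD0 hj
  have h2 : (0.114473*D)^k ≤ K^k * Real.exp (0.114473*D - k) := tangent _ _ _ (by norm_num) hD0 hk
  have e1 : Real.exp (0.32829*D - j) * Real.exp (0.114473*D - k) *
      (Real.exp 1.114474^j * Real.exp 1.671711^k) = Real.exp 1^(j+2*k) := by
    rw [← Real.exp_nat_mul, ← Real.exp_nat_mul, ← Real.exp_nat_mul, ← Real.exp_add, ← Real.exp_add,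
      ← Real.exp_add]
    congr 1
    rw [hD, hJ, hK]
    push_cast
    ring
  have hmain : (0.32829*D)^j * (0.114473*D)^k ≤
      (0.32829:ℝ)^j * (0.114473:ℝ)^k *
        (0.999406512^j * 1.64170508913216^k * Real.exp 1^(j+2*k) * J^j * K^k) := by
    calc (0.32829*D)^j * (0.114473*D)^k
        ≤ (J^j * Real.exp (0.32829*D - j)) * (K^k * Real.exp (0.114473*D - k)) := by
          apply mul_le_mul h1 h2 (by positivity) (by positivity)
      _ ≤ (J^j * Real.exp (0.32829*D - j)) * (K^k * Real.exp (0.114473*D - k)) *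
            ((0.999406512 * 0.32829 * Real.exp 1.114474)^j *
             (1.64170508913216 * 0.114473 * Real.exp 1.671711)^k) := by
          apply le_mul_of_one_le_right (by positivity)
          have := one_le_pow₀ N1 (n := j)
          have := one_le_pow₀ N2 (n := k)
          nlinarith
      _ = (0.32829:ℝ)^j * (0.114473:ℝ)^k *
            (0.999406512^j * 1.64170508913216^k * Real.exp 1^(j+2*k) * J^j * K^k) := by
          rw [mul_pow, mul_pow, mul_pow, mul_pow, ← e1]
          ring
  have hL : (0.32829*D)^j * (0.114473*D)^k =
      (0.32829:ℝ)^j * (0.114473:ℝ)^k * D^(j+k) := by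
    rw [mul_pow, mul_pow, pow_add]; ring
  rw [hL] at hmain
  have hc : (0:ℝ) < (0.32829:ℝ)^j * (0.114473:ℝ)^k := by positivity
  calc D^(j+k) = ((0.32829:ℝ)^j * (0.114473:ℝ)^k * D^(j+k)) / ((0.32829:ℝ)^j * (0.114473:ℝ)^k) := by
        field_simp
    _ ≤ _ := by
        rw [div_le_iff₀ hc]
        linarith [hmain]

lemma key (j k : ℕ) (hj : 1 ≤ j) (hk : 1 ≤ k) :
    ((2*j+3*k).factorial : ℝ) * Real.exp 1 <
      (j.factorial : ℝ) * 2^j * (k.factorial : ℝ) * 6^k * ((2*j+3*k : ℕ):ℝ) *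
        0.9126^(2*j+3*k) * (0.6*((2*j+3*k:ℕ):ℝ))^(j+2*k) := by
  have hE : (0:ℝ) < Real.exp 1 := Real.exp_pos 1
  set d : ℕ := 2*j+3*k with hd
  set J := (j:ℝ) with hJ
  set K := (k:ℝ) with hK
  have hJ1 : (1:ℝ) ≤ J := by rw [hJ]; exact_mod_cast hj
  have hK1 : (1:ℝ) ≤ K := by rw [hK]; exact_mod_cast hk
  set D := ((d:ℕ):ℝ) with hDdef
  have hDval : D = 2*J+3*K := by rw [hDdef, hd, hJ, hK]; push_cast; ring
  have hD5 : (5:ℝ) ≤ D := by nlinarith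
  have hD0 : (0:ℝ) < D := by linarith
  have hsd : Real.sqrt D * Real.sqrt D = D := Real.mul_self_sqrt hD0.le
  have hsp : Real.sqrt π * Real.sqrt π = π := Real.mul_self_sqrt Real.pi_nonneg
  have hs2 : Real.sqrt 2 * Real.sqrt 2 = 2 := Real.mul_self_sqrt (by norm_num)
  -- scalar inequality
  have scalar : Real.exp 1 ^ 2 <
      (Real.sqrt π * Real.sqrt π) * (Real.sqrt 2 * Real.sqrt 2) * Real.sqrt J * Real.sqrt K * Real.sqrt D := by
    rw [hsp, hs2]
    have hJs : (1:ℝ) ≤ Real.sqrt J := Real.one_le_sqrt.mpr hJ1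
    have hKs : (1:ℝ) ≤ Real.sqrt K := Real.one_le_sqrt.mpr hK1
    have h5 : (2.236:ℝ) ≤ Real.sqrt D := by
      have : (2.236:ℝ) ≤ Real.sqrt 5 := by
        nlinarith [Real.sq_sqrt (by norm_num : (0:ℝ) ≤ 5), Real.sqrt_nonneg 5]
      exact le_trans this (Real.sqrt_le_sqrt hD5)
    have hpi : (3.141592:ℝ) ≤ π := Real.pi_gt_d6.le
    have hprod : (3.141592:ℝ)*2*1*1*2.236 ≤ π * 2 * Real.sqrt J * Real.sqrt K * Real.sqrt D := by
      gcongr <;> norm_num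
    have he : Real.exp 1 ≤ 2.7182818286 := Real.exp_one_lt_d9.le
    nlinarith
  -- Stirling upper for d
  have A1 : (d.factorial : ℝ) * Real.exp 1 ^ (d+1) ≤ Real.exp 1 ^ 2 * Real.sqrt D * D^d := by
    have h := fact_upper2 d (by omega)
    rw [← hDdef] at h
    calc (d.factorial : ℝ) * Real.exp 1 ^ (d+1)
        = ((d.factorial : ℝ) * Real.exp 1 ^ d) * Real.exp 1 := by rw [pow_succ]; ring
      _ ≤ (Real.exp 1 * Real.sqrt D * D^d) * Real.exp 1 := mul_le_mul_of_nonneg_right h hE.le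
      _ = Real.exp 1 ^ 2 * Real.sqrt D * D^d := by ring
  have B1 : Real.sqrt π * (Real.sqrt 2 * Real.sqrt J) * J^j ≤ (j.factorial : ℝ) * Real.exp 1 ^ j := by
    have h := fact_lower2 j hj
    rw [← hJ] at h
    exact h
  have B2 : Real.sqrt π * (Real.sqrt 2 * Real.sqrt K) * K^k ≤ (k.factorial : ℝ) * Real.exp 1 ^ k := by
    have h := fact_lower2 k hk
    rw [← hK] at h
    exact h
  -- chain
  have C1 : Real.exp 1 ^ 2 * Real.sqrt D * D^d <
      (Real.sqrt π * Real.sqrt π) * (Real.sqrt 2 * Real.sqrt 2) * Real.sqrt J * Real.sqrt K * D * D^d := by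
    have hpos : (0:ℝ) < Real.sqrt D * D^d := by positivity
    calc Real.exp 1 ^ 2 * Real.sqrt D * D^d = Real.exp 1 ^ 2 * (Real.sqrt D * D^d) := by ring
      _ < ((Real.sqrt π * Real.sqrt π) * (Real.sqrt 2 * Real.sqrt 2) * Real.sqrt J * Real.sqrt K * Real.sqrt D) *
            (Real.sqrt D * D^d) := mul_lt_mul_of_pos_right scalar hpos
      _ = (Real.sqrt π * Real.sqrt π) * (Real.sqrt 2 * Real.sqrt 2) * Real.sqrt J * Real.sqrt K *
            (Real.sqrt D * Real.sqrt D) * D^d := by ring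
      _ = _ := by rw [hsd]
  have hDd : D^d = D^(j+k) * D^(j+2*k) := by rw [hd, ← pow_add]; congr 1; omega
  have hT' : D^(j+k) ≤ 0.999406512^j * 1.64170508913216^k * Real.exp 1^(j+2*k) * J^j * K^k := by
    rw [hDval]; exact TT j k hj hk
  have C2 : (Real.sqrt π * Real.sqrt π) * (Real.sqrt 2 * Real.sqrt 2) * Real.sqrt J * Real.sqrt K * D * D^d ≤
      (Real.sqrt π * Real.sqrt π) * (Real.sqrt 2 * Real.sqrt 2) * Real.sqrt J * Real.sqrt K * D *
        (0.999406512^j * 1.64170508913216^k * Real.exp 1^(j+2*k) * J^j * K^k) * D^(j+2*k) := by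
    rw [hDd]
    have hpos : (0:ℝ) ≤ (Real.sqrt π * Real.sqrt π) * (Real.sqrt 2 * Real.sqrt 2) * Real.sqrt J *
        Real.sqrt K * D * D^(j+2*k) := by positivity
    calc (Real.sqrt π * Real.sqrt π) * (Real.sqrt 2 * Real.sqrt 2) * Real.sqrt J * Real.sqrt K * D *
          (D^(j+k) * D^(j+2*k))
        = ((Real.sqrt π * Real.sqrt π) * (Real.sqrt 2 * Real.sqrt 2) * Real.sqrt J * Real.sqrt K * D *
            D^(j+2*k)) * D^(j+k) := by ring
      _ ≤ ((Real.sqrt π * Real.sqrt π) * (Real.sqrt 2 * Real.sqrt 2) * Real.sqrt J * Real.sqrt K * D *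
            D^(j+2*k)) * (0.999406512^j * 1.64170508913216^k * Real.exp 1^(j+2*k) * J^j * K^k) :=
          mul_le_mul_of_nonneg_left hT' hpos
      _ = _ := by ring
  -- cancellation identity
  have EQ : (Real.sqrt π * Real.sqrt π) * (Real.sqrt 2 * Real.sqrt 2) * Real.sqrt J * Real.sqrt K * D *
        (0.999406512^j * 1.64170508913216^k * Real.exp 1^(j+2*k) * J^j * K^k) * D^(j+2*k) =
      (Real.sqrt π * (Real.sqrt 2 * Real.sqrt J) * J^j) * 2^j *
        (Real.sqrt π * (Real.sqrt 2 * Real.sqrt K) * K^k) * 6^k *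
        D * 0.9126^d * (0.6*D)^(j+2*k) * Real.exp 1^(j+2*k) := by
    rw [show (0.999406512:ℝ) = 2*0.9126^2*0.6 from by norm_num,
        show (1.64170508913216:ℝ) = 6*0.9126^3*0.36 from by norm_num,
        show (0.9126:ℝ)^d = ((0.9126:ℝ)^2)^j * ((0.9126:ℝ)^3)^k from by
          rw [hd, ← pow_mul, ← pow_mul, ← pow_add],
        show ((0.6:ℝ)*D)^(j+2*k) = (0.6:ℝ)^j * (0.36:ℝ)^k * D^(j+2*k) from by
          rw [mul_pow, pow_add, pow_mul]; norm_num]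
    rw [mul_pow, mul_pow, mul_pow, mul_pow]
    ring
  have hEd : Real.exp 1 ^ (d+1) = Real.exp 1 * Real.exp 1 ^ j * Real.exp 1 ^ k * Real.exp 1 ^ (j+2*k) := by
    rw [show d+1 = 1+j+k+(j+2*k) from by omega, pow_add, pow_add, pow_add, pow_one]
  have C4 : (d.factorial : ℝ) * Real.exp 1 ^ (d+1) <
      ((j.factorial : ℝ) * Real.exp 1 ^ j) * 2^j * ((k.factorial : ℝ) * Real.exp 1 ^ k) * 6^k *
        D * 0.9126^d * (0.6*D)^(j+2*k) * Real.exp 1^(j+2*k) := by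
    refine lt_of_le_of_lt A1 (lt_of_lt_of_le (lt_of_lt_of_le C1 (le_of_le_of_eq C2 EQ)) ?_)
    gcongr <;> first | exact B1 | exact B2
  rw [hEd] at C4
  have hcancel : (0:ℝ) < Real.exp 1 ^ j * Real.exp 1 ^ k * Real.exp 1 ^ (j+2*k) := by positivity
  have h2 : ((d.factorial : ℝ) * Real.exp 1) * (Real.exp 1 ^ j * Real.exp 1 ^ k * Real.exp 1 ^ (j+2*k)) <
      ((j.factorial : ℝ) * 2^j * (k.factorial : ℝ) * 6^k * D * 0.9126^d * (0.6*D)^(j+2*k)) *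
        (Real.exp 1 ^ j * Real.exp 1 ^ k * Real.exp 1 ^ (j+2*k)) := by
    calc ((d.factorial : ℝ) * Real.exp 1) * (Real.exp 1 ^ j * Real.exp 1 ^ k * Real.exp 1 ^ (j+2*k))
        = (d.factorial : ℝ) * (Real.exp 1 * Real.exp 1 ^ j * Real.exp 1 ^ k * Real.exp 1 ^ (j+2*k)) := by
          ring
      _ < ((j.factorial : ℝ) * Real.exp 1 ^ j) * 2^j * ((k.factorial : ℝ) * Real.exp 1 ^ k) * 6^k *
            D * 0.9126^d * (0.6*D)^(j+2*k) * Real.exp 1^(j+2*k) := C4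
      _ = _ := by ring
  exact lt_of_mul_lt_mul_right h2 hcancel.le
theorem stmt_8 (β : ℝ) (hβ : 0 < β) (d i j : ℕ) (hj : 0 < j) (hij : j < i)
    (hd : (d : ℤ) - 3 * i + j = 0) (hβd : β ≥ 0.6 * d) :
    (d.choose (2 * j) : ℝ) * ((2 * j).factorial / (j.factorial * 2 ^ j)) *
        ((d - 2 * j).choose (3 * (i - j)) : ℝ) *
        ((3 * (i - j)).factorial / ((i - j).factorial * 6 ^ (i - j))) *
        β ^ ((i : ℤ) - d + 1) <
      (d * β / Real.exp 1) * 0.9126 ^ d := by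
  have hE : (0:ℝ) < Real.exp 1 := Real.exp_pos 1
  set k := i - j with hk
  have hk1 : 1 ≤ k := by omega
  have hdn : d = 2*j + 3*k := by omega
  have e1 : d - 2*j = 3*k := by omega
  have e2 : (i:ℤ) - d + 1 = 1 - ((j + 2*k : ℕ) : ℤ) := by push_cast; omega
  set n := j + 2*k with hn
  rw [e1, e2, zpow_sub₀ hβ.ne', zpow_one, zpow_natCast, Nat.choose_self, Nat.cast_one]
  have hch : (d.choose (2*j) : ℝ) = (d.factorial : ℝ) / ((2*j).factorial * (d - 2*j).factorial) := by
    rw [Nat.cast_choose ℝ (by omega : 2*j ≤ d)]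
  rw [hch, e1]
  have hβn : (0:ℝ) < β ^ n := pow_pos hβ n
  have hD0 : (0:ℝ) < (d:ℝ) := by
    have h1 : 0 < d := by omega
    exact_mod_cast h1
  have hkey := key j k (by omega) hk1
  rw [← hdn] at hkey
  have hbpow : ((0.6:ℝ)*(d:ℝ))^n ≤ β^n := pow_le_pow_left₀ (by positivity) hβd n
  have hkey2 : (d.factorial : ℝ) * Real.exp 1 <
      (j.factorial : ℝ) * 2^j * (k.factorial : ℝ) * 6^k * (d:ℝ) * 0.9126^d * β^n :=
    lt_of_lt_of_le hkey (mul_le_mul_of_nonneg_left hbpow (by positivity))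
  have hL : (d.factorial : ℝ) / ((2*j).factorial * (3*k).factorial) *
        ((2*j).factorial / (j.factorial * 2 ^ j)) * 1 *
        ((3*k).factorial / (k.factorial * 6 ^ k)) * (β / β^n)
      = ((d.factorial : ℝ) * β) / ((j.factorial : ℝ) * 2^j * (k.factorial : ℝ) * 6^k * β^n) := by
    have h1 : ((2*j).factorial : ℝ) ≠ 0 := by exact_mod_cast (2*j).factorial_pos.ne'
    have h2 : ((3*k).factorial : ℝ) ≠ 0 := by exact_mod_cast (3*k).factorial_pos.ne'
    field_simp
  rw [hL, div_lt_iff₀ (by positivity)]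
  have hEβ : Real.exp 1 * (β/Real.exp 1) = β := by field_simp
  calc (d.factorial : ℝ) * β
      = ((d.factorial : ℝ) * Real.exp 1) * (β/Real.exp 1) := by rw [mul_assoc, hEβ]
    _ < ((j.factorial : ℝ) * 2^j * (k.factorial : ℝ) * 6^k * (d:ℝ) * 0.9126^d * β^n) *
          (β/Real.exp 1) := mul_lt_mul_of_pos_right hkey2 (by positivity)
    _ = (d:ℝ) * β / Real.exp 1 * 0.9126 ^ d * ((j.factorial : ℝ) * 2^j * (k.factorial : ℝ) * 6^k * β^n) := by
        ring


end Aux8
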